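/- Let m ≥ 0 and h ≥ 1 be integers, d : ℤ → ℝ a sequence, and N a seminorm on ℝ^{m+h+1} (coordinates indexed by i ∈ {−m,…,0,1,…,h}) satisfying condition (S): N(x) = 0 if and only if x_{−m} = ⋯ = x_0 = 0. For k ∈ ℤ define D_k ∈ ℝ^{m+h+1} by (D_k)_i = d_{k−i} for i ∈ {−m,…,h}, i.e. D_k = (d_{k+m},…,d_k,d_{k−1},…,d_{k−h}). Then the following are equivalent: (i) for every k ∈ ℤ, N(D_k) = 0 implies D_k = 0; (ii) for every k ∈ ℤ, if d_{k+m} = ⋯ = d_{k+1} = d_k = 0 then d_ℓ = 0 for every ℓ ≤ k−1. -/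

import Mathlib

theorem stmt7 (m h : ℕ) (hh : 1 ≤ h) (d : ℤ → ℝ)
    (N : Seminorm ℝ (EuclideanSpace ℝ (Fin (m + h + 1))))
    (hN : ∀ x : EuclideanSpace ℝ (Fin (m + h + 1)),
      N x = 0 ↔ ∀ i : Fin (m + h + 1), (i : ℕ) ≤ m → x i = 0)
    (D : ℤ → EuclideanSpace ℝ (Fin (m + h + 1)))
    (hD : ∀ (k : ℤ) (i : Fin (m + h + 1)), D k i = d (k + (m : ℤ) - ((i : ℕ) : ℤ))) :
    (∀ k : ℤ, N (D k) = 0 → D k = 0) ↔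
    (∀ k : ℤ, (∀ i : ℤ, 0 ≤ i → i ≤ (m : ℤ) → d (k + i) = 0) →
        ∀ l : ℤ, l ≤ k - 1 → d l = 0) := by
  constructor
  · intro H k hk l hl
    have key : ∀ n : ℕ, ∀ j : ℤ, k - n ≤ j → j ≤ k + m → d j = 0 := by
      intro n
      induction n with
      | zero =>
        intro j hj1 hj2
        have := hk (j - k) (by omega) (by omega)
        rwa [show k + (j - k) = j by ring] at this
      | succ n ih =>
        intro j hj1 hj2
        by_cases hc : k - n ≤ j
        · exact ih j hc hj2
        have hj : j = k - n - 1 := by omega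
        have hNz : N (D (k - n)) = 0 := by
          rw [hN]
          intro i hi
          rw [hD]
          exact ih _ (by omega) (by omega)
        have hDz := H _ hNz
        have h2 : D (k - n) ⟨m + 1, by omega⟩ = 0 := by
          rw [hDz]; rfl
        rw [hD] at h2
        rw [hj]
        have harith : k - (n : ℤ) - 1
            = k - n + m - (((⟨m + 1, by omega⟩ : Fin (m + h + 1)) : ℕ) : ℤ) := by
          push_cast; ring
        rw [harith]
        exact h2
    exact key (k - l).toNat l (by omega) (by omega)
  · intro H k hNz
    have hk0 : ∀ i : Fin (m + h + 1), (i : ℕ) ≤ m → D k i = 0 := (hN _).mp hNz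
    have hup : ∀ i : ℤ, 0 ≤ i → i ≤ (m : ℤ) → d (k + i) = 0 := by
      intro i hi1 hi2
      have := hk0 ⟨m - i.toNat, by omega⟩ (by simp)
      rw [hD] at this
      rwa [show k + (m : ℤ) - (((m - i.toNat : ℕ)) : ℤ) = k + i by omega] at this
    ext i
    rcases le_or_gt (i : ℕ) m with hle | hlt
    · exact hk0 i hle
    · rw [hD]
      have : k + (m : ℤ) - ((i : ℕ) : ℤ) ≤ k - 1 := by omega
      simpa using H k hup _ this
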